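/- If the IFS {S_j}_{j=1}^N of contractive similitudes satisfies the weak separation condition with function γ(·), then every vertex of the quotient graph (X˜, 𝓔) has degree at most γ(2κ + |K|) + γ(r(2κ + |K|)) + γ(r⁻¹(2κ + |K|)), where |K| denotes the diameter of the self-similar set K; in particular (X˜, 𝓔) is of bounded degree. -/

import Mathlib

open Metric Filter

namespace HypIFS

/-- Euclidean space `ℝ^d`. -/
abbrev Euc (d : ℕ) := EuclideanSpace ℝ (Fin d)

/-- The distance `dist(A, B)` between two subsets of a metric space. -/
noncomputable def setDist {E : Type*} [PseudoMetricSpace E] (A B : Set E) : ℝ :=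
  sInf (Set.image2 dist A B)

variable {d N : ℕ}

/-- For a word `x = i₁⋯i_k`, the composition `S_x = S_{i₁} ∘ ⋯ ∘ S_{i_k}`. -/
def sWord (S : Fin N → Euc d → Euc d) : List (Fin N) → Euc d → Euc d :=
  fun w => w.foldr (fun i f => S i ∘ f) id

/-- For a word `x = i₁⋯i_k`, the product `r_x = r_{i₁} ⋯ r_{i_k}` of contraction ratios. -/
def rWord (ρ : Fin N → ℝ) (w : List (Fin N)) : ℝ := (w.map ρ).prod

/-- The coding level `𝓙_n = {i₁⋯i_k : r_{i₁⋯i_k} ≤ rⁿ < r_{i₁⋯i_{k−1}}}`,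
with `𝓙_0` consisting of the empty word. -/
def Jlevel (ρ : Fin N → ℝ) (r : ℝ) (n : ℕ) : Set (List (Fin N)) :=
  if n = 0 then {([] : List (Fin N))}
  else {w | rWord ρ w ≤ r ^ n ∧ r ^ n < rWord ρ w.dropLast}

/-- The vertical (parent–child) edge relation: `x ∈ 𝓙_n` is the initial segment
of `y ∈ 𝓙_{n+1}`. -/
def EV (ρ : Fin N → ℝ) (r : ℝ) (x y : List (Fin N)) : Prop :=
  ∃ n : ℕ, x ∈ Jlevel ρ r n ∧ y ∈ Jlevel ρ r (n + 1) ∧ x <+: y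

/-- The horizontal edge relation: `x ≠ y` in the same level `𝓙_n` with
`dist(K_x, K_y) ≤ κ rⁿ`. -/
def EH (S : Fin N → Euc d → Euc d) (ρ : Fin N → ℝ) (r κ : ℝ) (K : Set (Euc d))
    (x y : List (Fin N)) : Prop :=
  ∃ n : ℕ, x ∈ Jlevel ρ r n ∧ y ∈ Jlevel ρ r n ∧ x ≠ y ∧
    setDist (sWord S x '' K) (sWord S y '' K) ≤ κ * r ^ n

/-- The augmented tree `(X, 𝓔)`, `𝓔 = 𝓔_v ∪ 𝓔_h`, as a graph on the word space
(words belonging to no level `𝓙_n` are isolated vertices). -/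
def augIFS (S : Fin N → Euc d → Euc d) (ρ : Fin N → ℝ) (r κ : ℝ) (K : Set (Euc d)) :
    SimpleGraph (List (Fin N)) where
  Adj x y := (EV ρ r x y ∨ EV ρ r y x ∨ EH S ρ r κ K x y ∨ EH S ρ r κ K y x) ∧ x ≠ y
  symm := by
    constructor
    rintro x y ⟨h1 | h2 | h3 | h4, hne⟩
    · exact ⟨Or.inr (Or.inl h1), hne.symm⟩
    · exact ⟨Or.inl h2, hne.symm⟩
    · exact ⟨Or.inr (Or.inr (Or.inr h3)), hne.symm⟩
    · exact ⟨Or.inr (Or.inr (Or.inl h4)), hne.symm⟩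
  loopless := ⟨fun x h => h.2 rfl⟩

/-- A graph is of bounded degree if `sup_x deg(x) < ∞`. -/
def BddDeg {V : Type*} (G : SimpleGraph V) : Prop :=
  ∃ M : ℕ, ∀ x : V, {y | G.Adj x y}.Finite ∧ {y | G.Adj x y}.ncard ≤ M

/-- Vertical edges of the quotient graph `X˜`: classes (recorded as a level
together with a map) in consecutive levels having representatives `x, y` with
`x = y⁻¹`. -/
def EVq (S : Fin N → Euc d → Euc d) (ρ : Fin N → ℝ) (r : ℝ)
    (u v : ℕ × (Euc d → Euc d)) : Prop :=
  u.1 + 1 = v.1 ∧ ∃ x y : List (Fin N), x ∈ Jlevel ρ r u.1 ∧ y ∈ Jlevel ρ r v.1 ∧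
    sWord S x = u.2 ∧ sWord S y = v.2 ∧ x <+: y

/-- Horizontal edges of the quotient graph `X˜`: distinct classes in the same
level having representatives `x, y` with `dist(K_x, K_y) ≤ κ rⁿ`. -/
def EHq (S : Fin N → Euc d → Euc d) (ρ : Fin N → ℝ) (r κ : ℝ) (K : Set (Euc d))
    (u v : ℕ × (Euc d → Euc d)) : Prop :=
  u.1 = v.1 ∧ u ≠ v ∧ ∃ x y : List (Fin N), x ∈ Jlevel ρ r u.1 ∧ y ∈ Jlevel ρ r u.1 ∧
    sWord S x = u.2 ∧ sWord S y = v.2 ∧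
    setDist (sWord S x '' K) (sWord S y '' K) ≤ κ * r ^ u.1

/-- The quotient augmented tree `(X˜, 𝓔)`, identifying words `x, y` in the same
level with `S_x = S_y`; a class is recorded as its level together with its map
(pairs that arise from no word are isolated vertices). -/
def quotIFS (S : Fin N → Euc d → Euc d) (ρ : Fin N → ℝ) (r κ : ℝ) (K : Set (Euc d)) :
    SimpleGraph (ℕ × (Euc d → Euc d)) where
  Adj u v := (EVq S ρ r u v ∨ EVq S ρ r v u ∨ EHq S ρ r κ K u v ∨ EHq S ρ r κ K v u) ∧ u ≠ v
  symm := by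
    constructor
    rintro u v ⟨h1 | h2 | h3 | h4, hne⟩
    · exact ⟨Or.inr (Or.inl h1), hne.symm⟩
    · exact ⟨Or.inl h2, hne.symm⟩
    · exact ⟨Or.inr (Or.inr (Or.inr h3)), hne.symm⟩
    · exact ⟨Or.inr (Or.inr (Or.inl h4)), hne.symm⟩
  loopless := ⟨fun u h => h.2 rfl⟩

/-- The weak separation condition with bound `γ` for diameter-constant `c`:
for any `n` and any `D` with `diam D ≤ c rⁿ`, the set of distinct maps
`{S_x : x ∈ 𝓙_n, S_x(K) ∩ D ≠ ∅}` has at most `γ` elements. -/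
def WSCbound (S : Fin N → Euc d → Euc d) (ρ : Fin N → ℝ) (r : ℝ) (K : Set (Euc d))
    (c : ℝ) (γ : ℕ) : Prop :=
  ∀ (n : ℕ) (D : Set (Euc d)), Metric.diam D ≤ c * r ^ n →
    {f : Euc d → Euc d | ∃ x ∈ Jlevel ρ r n, sWord S x = f ∧
      ((sWord S x '' K) ∩ D).Nonempty}.Finite ∧
    {f : Euc d → Euc d | ∃ x ∈ Jlevel ρ r n, sWord S x = f ∧
      ((sWord S x '' K) ∩ D).Nonempty}.ncard ≤ γ

/-- The weak separation condition. -/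
def WSC (S : Fin N → Euc d → Euc d) (ρ : Fin N → ℝ) (r : ℝ) (K : Set (Euc d)) : Prop :=
  ∀ c : ℝ, 0 < c → ∃ γ : ℕ, WSCbound S ρ r K c γ


section Helpers

variable {d N : ℕ}

lemma sWord_nil (S : Fin N → Euc d → Euc d) : sWord S [] = id := rfl

lemma sWord_cons (S : Fin N → Euc d → Euc d) (i : Fin N) (w : List (Fin N)) :
    sWord S (i :: w) = S i ∘ sWord S w := rfl

lemma sWord_foldr (S : Fin N → Euc d → Euc d) (x : List (Fin N)) (g : Euc d → Euc d) :
    x.foldr (fun i f => S i ∘ f) g = sWord S x ∘ g := by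
  induction x with
  | nil => rfl
  | cons i w ih => simp [sWord, List.foldr_cons, ih, Function.comp] at *; rfl

lemma sWord_append (S : Fin N → Euc d → Euc d) (x y : List (Fin N)) :
    sWord S (x ++ y) = sWord S x ∘ sWord S y := by
  show (x ++ y).foldr (fun i f => S i ∘ f) id = _
  rw [List.foldr_append, sWord_foldr]
  rfl

lemma rWord_nil (ρ : Fin N → ℝ) : rWord ρ [] = 1 := rfl

lemma rWord_cons (ρ : Fin N → ℝ) (i : Fin N) (w : List (Fin N)) :
    rWord ρ (i :: w) = ρ i * rWord ρ w := by
  simp [rWord]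

lemma rWord_pos {ρ : Fin N → ℝ} (hρ0 : ∀ j, 0 < ρ j) (w : List (Fin N)) :
    0 < rWord ρ w := by
  induction w with
  | nil => norm_num [rWord_nil]
  | cons i w ih => rw [rWord_cons]; exact mul_pos (hρ0 i) ih

lemma dist_sWord {S : Fin N → Euc d → Euc d} {ρ : Fin N → ℝ}
    (hsim : ∀ j a b, dist (S j a) (S j b) = ρ j * dist a b)
    (w : List (Fin N)) (a b : Euc d) :
    dist (sWord S w a) (sWord S w b) = rWord ρ w * dist a b := by
  induction w with
  | nil => simp [sWord_nil, rWord_nil]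
  | cons i w ih =>
      rw [sWord_cons, rWord_cons]
      simp only [Function.comp_apply]
      rw [hsim, ih, mul_assoc]

lemma continuous_sWord {S : Fin N → Euc d → Euc d} {ρ : Fin N → ℝ}
    (hρ0 : ∀ j, 0 < ρ j)
    (hsim : ∀ j a b, dist (S j a) (S j b) = ρ j * dist a b)
    (w : List (Fin N)) : Continuous (sWord S w) := by
  induction w with
  | nil => exact continuous_id
  | cons i w ih =>
      rw [sWord_cons]
      have hlip : LipschitzWith (ρ i).toNNReal (S i) := by
        apply LipschitzWith.of_dist_le_mul
        intro a b
        rw [hsim i a b, Real.coe_toNNReal _ (hρ0 i).le]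
      exact hlip.continuous.comp ih

lemma sWord_image_subset {S : Fin N → Euc d → Euc d} {K : Set (Euc d)}
    (hKinv : K = ⋃ j, S j '' K) (w : List (Fin N)) :
    sWord S w '' K ⊆ K := by
  induction w with
  | nil => simp [sWord_nil]
  | cons i w ih =>
      rw [sWord_cons, Set.image_comp]
      refine (Set.image_mono ih).trans ?_
      conv_rhs => rw [hKinv]
      exact Set.subset_iUnion (fun j => S j '' K) i

lemma prefix_image_subset {S : Fin N → Euc d → Euc d} {K : Set (Euc d)}
    (hKinv : K = ⋃ j, S j '' K) {x y : List (Fin N)} (h : x <+: y) :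
    sWord S y '' K ⊆ sWord S x '' K := by
  obtain ⟨t, rfl⟩ := h
  rw [sWord_append, Set.image_comp]
  exact Set.image_mono (sWord_image_subset hKinv t)

lemma mem_J_rWord_le {ρ : Fin N → ℝ} {r : ℝ} {n : ℕ} {x : List (Fin N)}
    (hx : x ∈ Jlevel ρ r n) : rWord ρ x ≤ r ^ n := by
  unfold Jlevel at hx
  split at hx
  · next h => subst h; simp only [Set.mem_singleton_iff] at hx; subst hx; simp [rWord_nil]
  · exact hx.1

lemma setDist_comm' {E : Type*} [PseudoMetricSpace E] (A B : Set E) :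
    setDist A B = setDist B A := by
  unfold setDist
  rw [Set.image2_comm (fun a b => dist_comm a b)]

lemma exists_infDist_le {E : Type*} [MetricSpace E] {A B : Set E} {c : ℝ}
    (hA : A.Nonempty) (hB : IsCompact B) (hBne : B.Nonempty)
    (h : setDist A B ≤ c) : ∃ b ∈ B, Metric.infDist b A ≤ c := by
  obtain ⟨b0, hb0, hmin⟩ := hB.exists_isMinOn hBne
    (Metric.continuous_infDist_pt A).continuousOn
  refine ⟨b0, hb0, ?_⟩
  by_contra hc
  push_neg at hc
  have hge : c < setDist A B := by
    refine lt_of_lt_of_le hc (le_csInf ?_ ?_)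
    · obtain ⟨a, ha⟩ := hA
      exact ⟨dist a b0, Set.mem_image2_of_mem ha hb0⟩
    · rintro p ⟨a, ha, b, hb, rfl⟩
      calc Metric.infDist b0 A ≤ Metric.infDist b A := hmin hb
        _ ≤ dist b a := Metric.infDist_le_dist_of_mem ha
        _ = dist a b := dist_comm b a
  linarith

lemma mem_cthickening_of_infDist_le' {E : Type*} [PseudoMetricSpace E] {A : Set E}
    (hA : A.Nonempty) {b : E} {δ : ℝ} (hδ : 0 ≤ δ) (h : Metric.infDist b A ≤ δ) :
    b ∈ Metric.cthickening δ A := by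
  rw [Metric.mem_cthickening_iff,
    ENNReal.le_ofReal_iff_toReal_le (Metric.infEdist_ne_top hA) hδ]
  exact h

lemma finite_ncard_three {β : Type*} {T U1 U2 U3 : Set β} (h : T ⊆ U1 ∪ U2 ∪ U3)
    (h1 : U1.Finite) (h2 : U2.Finite) (h3 : U3.Finite) :
    T.Finite ∧ T.ncard ≤ U1.ncard + U2.ncard + U3.ncard := by
  have hU : (U1 ∪ U2 ∪ U3).Finite := (h1.union h2).union h3
  refine ⟨hU.subset h, (Set.ncard_le_ncard h hU).trans ?_⟩
  calc (U1 ∪ U2 ∪ U3).ncard ≤ (U1 ∪ U2).ncard + U3.ncard :=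
        Set.ncard_union_le _ _
    _ ≤ U1.ncard + U2.ncard + U3.ncard :=
        Nat.add_le_add_right (Set.ncard_union_le _ _) _

end Helpers

/-- If the IFS satisfies the weak separation condition with function `γ(·)`,
then every vertex of the quotient graph `(X˜, 𝓔)` has degree at most
`γ(2κ + |K|) + γ(r(2κ + |K|)) + γ(r⁻¹(2κ + |K|))`; in particular `(X˜, 𝓔)` is
of bounded degree. -/
theorem WSC_implies_quotient_degree_bound {d N : ℕ} (hN : 2 ≤ N)
    (S : Fin N → Euc d → Euc d) (ρ : Fin N → ℝ) (r κ : ℝ) (K : Set (Euc d))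
    (hρ0 : ∀ j, 0 < ρ j) (hρ1 : ∀ j, ρ j < 1)
    (hsim : ∀ j a b, dist (S j a) (S j b) = ρ j * dist a b)
    (hr : IsLeast (Set.range ρ) r) (hκ : 0 < κ)
    (hKc : IsCompact K) (hKne : K.Nonempty) (hKinv : K = ⋃ j, S j '' K)
    (γ : ℝ → ℕ) (hγ : ∀ c : ℝ, 0 < c → WSCbound S ρ r K c (γ c)) :
    (∀ v : ℕ × (Euc d → Euc d),
      {u | (quotIFS S ρ r κ K).Adj v u}.Finite ∧
      {u | (quotIFS S ρ r κ K).Adj v u}.ncard ≤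
        γ (2 * κ + Metric.diam K) + γ (r * (2 * κ + Metric.diam K)) +
          γ (r⁻¹ * (2 * κ + Metric.diam K))) ∧
    BddDeg (quotIFS S ρ r κ K) := by
  set c0 : ℝ := 2 * κ + Metric.diam K with hc0def
  have hc0 : 0 < c0 := by
    have := Metric.diam_nonneg (s := K); unfold c0; linarith
  obtain ⟨⟨j0, hj0⟩, hrlb⟩ := hr
  have hr0 : 0 < r := hj0 ▸ hρ0 j0
  have key : ∀ v : ℕ × (Euc d → Euc d),
      {u | (quotIFS S ρ r κ K).Adj v u}.Finite ∧
      {u | (quotIFS S ρ r κ K).Adj v u}.ncard ≤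
        γ c0 + γ (r * c0) + γ (r⁻¹ * c0) := by
    rintro ⟨n, f⟩
    by_cases hrep : ∃ x ∈ Jlevel ρ r n, sWord S x = f
    · obtain ⟨x0, hx0, hSx0⟩ := hrep
      set D : Set (Euc d) := Metric.cthickening (κ * r ^ n) (f '' K) with hDdef
      have hκrn : 0 ≤ κ * r ^ n := by positivity
      -- diam bound on f '' K
      have hdiamfK : Metric.diam (f '' K) ≤ Metric.diam K * r ^ n := by
        rw [← hSx0]
        have hrx : rWord ρ x0 ≤ r ^ n := mem_J_rWord_le hx0
        have hrxpos := rWord_pos hρ0 x0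
        refine Metric.diam_le_of_forall_dist_le (by positivity) ?_
        rintro p ⟨a, ha, rfl⟩ q ⟨b, hb, rfl⟩
        rw [dist_sWord hsim]
        calc rWord ρ x0 * dist a b ≤ r ^ n * Metric.diam K := by
              apply mul_le_mul hrx (Metric.dist_le_diam_of_mem hKc.isBounded ha hb)
                dist_nonneg (by positivity)
          _ = Metric.diam K * r ^ n := mul_comm _ _
      have hD : Metric.diam D ≤ c0 * r ^ n := by
        calc Metric.diam D ≤ Metric.diam (f '' K) + 2 * (κ * r ^ n) :=
              Metric.diam_cthickening_le _ hκrn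
          _ ≤ Metric.diam K * r ^ n + 2 * (κ * r ^ n) := by linarith
          _ = c0 * r ^ n := by unfold c0; ring
      -- the three WSC sets
      have hfKsubD : f '' K ⊆ D := Metric.self_subset_cthickening _
      set F : ℕ → Set (Euc d → Euc d) := fun p =>
        {g : Euc d → Euc d | ∃ x ∈ Jlevel ρ r p, sWord S x = g ∧
          ((sWord S x '' K) ∩ D).Nonempty} with hFdef
      have hsub : {u | (quotIFS S ρ r κ K).Adj (n, f) u} ⊆
          Prod.mk (n - 1) '' F (n - 1) ∪ Prod.mk n '' F n ∪ Prod.mk (n + 1) '' F (n + 1) := by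
        rintro ⟨m, g⟩ ⟨hadj, -⟩
        simp only [Set.mem_union]
        obtain ⟨a0, ha0⟩ := id hKne
        rcases hadj with h | h | h | h
        · -- EVq (n,f) (m,g) : child, level n+1
          obtain ⟨h1, x, y, hx, hy, hSx, hSy, hpre⟩ := h
          simp only at h1 hSx hSy
          refine Or.inr ⟨g, ⟨y, h1 ▸ hy, hSy, ⟨sWord S y a0, Set.mem_image_of_mem _ ha0, ?_⟩⟩, by rw [h1]⟩
          exact hfKsubD (hSx ▸ prefix_image_subset hKinv hpre (Set.mem_image_of_mem _ ha0))
        · -- EVq (m,g) (n,f) : parent, level n-1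
          obtain ⟨h1, x, y, hx, hy, hSx, hSy, hpre⟩ := h
          simp only at h1 hSx hSy
          have hm : m = n - 1 := by omega
          refine Or.inl (Or.inl ⟨g, ⟨x, hm ▸ hx, hSx, ⟨sWord S y a0, ?_, ?_⟩⟩, by rw [hm]⟩)
          · exact prefix_image_subset hKinv hpre (Set.mem_image_of_mem _ ha0)
          · exact hfKsubD (hSy ▸ Set.mem_image_of_mem _ ha0)
        · -- EHq (n,f) (m,g)
          obtain ⟨h1, -, x, y, hx, hy, hSx, hSy, hdist⟩ := h
          simp only at h1 hSx hSy hx hy hdist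
          rw [hSx] at hdist
          obtain ⟨b, hbK, hbd⟩ := exists_infDist_le (hKne.image f)
            (hKc.image (continuous_sWord hρ0 hsim y)) (hKne.image _) hdist
          refine Or.inl (Or.inr ⟨g, ⟨y, hy, hSy, ⟨b, hbK, ?_⟩⟩, by rw [← h1]⟩)
          exact mem_cthickening_of_infDist_le' (hKne.image f) hκrn hbd
        · -- EHq (m,g) (n,f)
          obtain ⟨h1, -, x, y, hx, hy, hSx, hSy, hdist⟩ := h
          simp only at h1 hSx hSy hx hy hdist
          rw [hSy, setDist_comm'] at hdist
          rw [h1] at hdist hx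
          obtain ⟨b, hbK, hbd⟩ := exists_infDist_le (hKne.image f)
            (hKc.image (continuous_sWord hρ0 hsim x)) (hKne.image _) hdist
          refine Or.inl (Or.inr ⟨g, ⟨x, hx, hSx, ⟨b, hbK, ?_⟩⟩, by rw [h1]⟩)
          exact mem_cthickening_of_infDist_le' (hKne.image f) hκrn hbd
      -- counting
      have hBn := hγ c0 hc0 n D hD
      have hCn := hγ (r⁻¹ * c0) (by positivity) (n + 1) D (by
        rw [pow_succ, show r⁻¹ * c0 * (r ^ n * r) = c0 * r ^ n * (r⁻¹ * r) by ring,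
          inv_mul_cancel₀ hr0.ne', mul_one]
        exact hD)
      have hU2 : (Prod.mk n '' F n).Finite := hBn.1.image _
      have hU3 : (Prod.mk (n + 1) '' F (n + 1)).Finite := hCn.1.image _
      have hU2c : (Prod.mk n '' F n).ncard ≤ γ c0 :=
        (Set.ncard_image_le hBn.1).trans hBn.2
      have hU3c : (Prod.mk (n + 1) '' F (n + 1)).ncard ≤ γ (r⁻¹ * c0) :=
        (Set.ncard_image_le hCn.1).trans hCn.2
      rcases n with _ | p
      · -- n = 0 : the parent set coincides with the same-level set
        have h01 : (0 : ℕ) - 1 = 0 := rfl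
        rw [h01] at hsub
        obtain ⟨hfin, hcard⟩ := finite_ncard_three hsub hU2 hU2 hU3
        rw [Set.union_self] at hsub
        have hfin' := (hU2.union hU3).subset hsub
        have hcard' := (Set.ncard_le_ncard hsub (hU2.union hU3)).trans
          ((Set.ncard_union_le _ _).trans (Nat.add_le_add hU2c hU3c))
        exact ⟨hfin', by omega⟩
      · -- n = p + 1
        have hAn := hγ (r * c0) (by positivity) p D (by
          rw [show r * c0 * r ^ p = c0 * (r ^ p * r) by ring, ← pow_succ]
          exact hD)
        have hsucc : p + 1 - 1 = p := rfl
        rw [hsucc] at hsub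
        have hU1 : (Prod.mk p '' F p).Finite := hAn.1.image _
        have hU1c : (Prod.mk p '' F p).ncard ≤ γ (r * c0) :=
          (Set.ncard_image_le hAn.1).trans hAn.2
        obtain ⟨hfin, hcard⟩ := finite_ncard_three hsub hU1 hU2 hU3
        exact ⟨hfin, hcard.trans (by omega)⟩
    · -- no representative: no neighbors
      have hempty : {u | (quotIFS S ρ r κ K).Adj (n, f) u} = ∅ := by
        ext ⟨m, g⟩
        simp only [Set.mem_setOf_eq, Set.mem_empty_iff_false, iff_false]
        rintro ⟨h | h | h | h, -⟩
        · obtain ⟨-, x, y, hx, -, hSx, -, -⟩ := h; exact hrep ⟨x, hx, hSx⟩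
        · obtain ⟨-, x, y, -, hy, -, hSy, -⟩ := h; exact hrep ⟨y, hy, hSy⟩
        · obtain ⟨h1, -, x, y, hx, -, hSx, -, -⟩ := h; exact hrep ⟨x, hx, hSx⟩
        · obtain ⟨h1, -, x, y, -, hy, -, hSy, -⟩ := h
          simp only at h1 hy hSy
          exact hrep ⟨y, h1 ▸ hy, hSy⟩
      rw [hempty]
      simp [Set.finite_empty]
  exact ⟨key, ⟨γ c0 + γ (r * c0) + γ (r⁻¹ * c0), key⟩⟩


end HypIFS
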